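/- Let X be a topological space, k a unital ring, and n ≥ 2 an integer. Let U₁,…,Uₙ be open subsets of X whose union is X. Let F be a sheaf of rings on X, let β : Mₙ(k) → F(X) be a unital ring homomorphism, and for each j let γⱼ : k → F(Uⱼ) be a unital ring homomorphism. Suppose that for each j ∈ {1,…,n}, the composite of β with the diagonal embedding d : kⁿ → Mₙ(k) followed by the restriction map F(X) → F(Uⱼ) equals γⱼ ∘ πⱼ, where πⱼ : kⁿ → k is the j-th projection. Then F is the zero sheaf: F(V) is the trivial ring for every open set V ⊆ X. -/

import Mathlib

universe u

open CategoryTheory Opposite TopologicalSpace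

theorem stmt_9 (X : TopCat.{u}) (k : Type u) [Ring k] (n : ℕ) (hn : 2 ≤ n)
    (U : Fin n → Opens X) (hU : (⨆ j, U j) = ⊤)
    (F : TopCat.Sheaf RingCat.{u} X)
    (β : Matrix (Fin n) (Fin n) k →+* F.val.obj (op ⊤))
    (γ : ∀ j : Fin n, k →+* F.val.obj (op (U j)))
    (hcomp : ∀ (j : Fin n) (a : Fin n → k),
      F.val.map (homOfLE (le_top : U j ≤ ⊤)).op (β (Matrix.diagonalRingHom (Fin n) k a)) =
        γ j (a j)) :
    ∀ V : Opens X, Subsingleton (F.val.obj (op V)) := by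
  have hsingle : ∀ (i : Fin n), Matrix.diagonalRingHom (Fin n) k (Pi.single i 1) =
      Matrix.single i i 1 := by
    intro i
    ext a b
    simp [Matrix.diagonalRingHom_apply, Matrix.diagonal, Matrix.single, Pi.single_apply]
    aesop
  -- 0 = 1 in each F(U j)
  have key : ∀ j : Fin n, (0 : F.val.obj (op (U j))) = 1 := by
    intro j
    obtain ⟨i, hij⟩ : ∃ i : Fin n, i ≠ j := by
      rcases Decidable.eq_or_ne j ⟨0, by omega⟩ with h | h
      · exact ⟨⟨1, by omega⟩, by simp [h, Fin.ext_iff]⟩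
      · exact ⟨⟨0, by omega⟩, fun e => h e.symm⟩
    set r := F.val.map (homOfLE (le_top : U j ≤ ⊤)).op with hr
    have h1 : r (β (Matrix.single j j 1)) = 1 := by
      have := hcomp j (Pi.single j 1)
      rw [hsingle, Pi.single_eq_same, map_one] at this
      exact this
    have h0 : r (β (Matrix.single i i 1)) = 0 := by
      have := hcomp j (Pi.single i 1)
      rw [hsingle, Pi.single_eq_of_ne hij.symm, map_zero] at this
      exact this
    have hmul : Matrix.single j i (1:k) * Matrix.single i i 1 *
        Matrix.single i j 1 = Matrix.single j j 1 := by
      rw [Matrix.single_mul_single_same, Matrix.single_mul_single_same, one_mul, one_mul]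
    have : (1 : F.val.obj (op (U j))) =
        r (β (Matrix.single j i 1)) * r (β (Matrix.single i i 1)) *
        r (β (Matrix.single i j 1)) := by
      rw [← map_mul, ← map_mul, ← map_mul, ← map_mul, hmul, h1]
    rw [h0, mul_zero, zero_mul] at this
    exact this.symm
  intro V
  have hsub : ∀ j : Fin n, Subsingleton (F.val.obj (op (V ⊓ U j))) := by
    intro j
    have : (0 : F.val.obj (op (V ⊓ U j))) = 1 := by
      have := congrArg (F.val.map (homOfLE (inf_le_right : V ⊓ U j ≤ U j)).op) (key j)
      rwa [map_zero, map_one] at this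
    exact subsingleton_of_zero_eq_one this
  constructor
  intro s t
  apply F.eq_of_locally_eq' (fun j : ULift.{u} (Fin n) => V ⊓ U j.down) V
    (fun j => homOfLE inf_le_left)
  · intro x hx
    have : x ∈ (⊤ : Opens X) := trivial
    rw [← hU] at this
    obtain ⟨j, hj⟩ := Opens.mem_iSup.mp this
    exact Opens.mem_iSup.mpr ⟨ULift.up j, ⟨hx, hj⟩⟩
  · intro j
    have := hsub j.down
    exact Subsingleton.elim _ _
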